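/- Let U : ℝᴺ → ℝ be continuously differentiable with gradient ∇U, let T₁ ≤ T₂, and let φ : [T₁,T₂] → ℝᴺ be an admissible path with derivative g. Then (1/4)∫_{T₁}^{T₂} ‖g(t) + ∇U(φ(t))‖² dt ≥ sup_{t∈[T₁,T₂]} U(φ(t)) − U(φ(T₁)); in particular it is ≥ U(φ(T₂)) − U(φ(T₁)). Moreover, equality (1/4)∫_{T₁}^{T₂} ‖g(t) + ∇U(φ(t))‖² dt = U(φ(T₂)) − U(φ(T₁)) holds if and only if g(t) = ∇U(φ(t)) for almost every t ∈ [T₁,T₂], i.e. if and only if φ is a (generalized) integral curve of the gradient ascent field ∇U. (This is the Euclidean gradient case of the paper's lower bound for the action S_v with drift v = −∇U: S_v(φ) ≥ ∫_φ(−v♭), with equality exactly for integral curves of −v.) -/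

import Mathlib

open MeasureTheory Set RealInnerProductSpace

variable {E : Type*} [NormedAddCommGroup E] [InnerProductSpace ℝ E]
  [CompleteSpace E] [ProperSpace E]

omit [ProperSpace E] in
lemma grad_inner_eq (U : E → ℝ) (x v : E) :
    ⟪gradient U x, v⟫ = fderiv ℝ U x v := by
  rw [← InnerProductSpace.toDual_apply_apply, gradient,
    LinearIsometryEquiv.apply_symm_apply]

omit [ProperSpace E] in
lemma continuous_gradient (U : E → ℝ) (hU : ContDiff ℝ 1 U) :
    Continuous (gradient U) :=
  (InnerProductSpace.toDual ℝ E).symm.continuous.comp (hU.continuous_fderiv one_ne_zero)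

/-- FTC for `U` composed with an absolutely continuous path. -/
lemma ftc_comp (U : E → ℝ) (hU : ContDiff ℝ 1 U) {T₁ T₂ : ℝ} (hT : T₁ ≤ T₂)
    {g : ℝ → E} (hgi : IntegrableOn g (Icc T₁ T₂)) (x₀ : E) {t : ℝ} (ht : t ∈ Icc T₁ T₂) :
    U (x₀ + ∫ s in T₁..t, g s) - U x₀ =
      ∫ s in T₁..t, ⟪gradient U (x₀ + ∫ r in T₁..s, g r), g s⟫ := by
  obtain ⟨hT₁t, htT₂⟩ := ht
  set φ : ℝ → E := fun s => x₀ + ∫ r in T₁..s, g r with hφdef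
  have hguIcc : IntegrableOn g (uIcc T₁ T₂) := by rwa [uIcc_of_le hT]
  have hφc : ContinuousOn φ (Icc T₁ T₂) := by
    rw [← uIcc_of_le hT]
    exact continuousOn_const.add (intervalIntegral.continuousOn_primitive_interval hguIcc)
  have hgrad : Continuous (gradient U) := continuous_gradient U hU
  have hUc : Continuous U := hU.continuous
  -- compact sets
  set K : Set E := φ '' Icc T₁ T₂ with hKdef
  have hK : IsCompact K := isCompact_Icc.image_of_continuousOn hφc
  set K1 : Set E := Metric.cthickening 1 K with hK1def
  have hK1 : IsCompact K1 := hK.cthickening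
  have hKK1 : K ⊆ K1 := Metric.self_subset_cthickening K
  obtain ⟨M, hM⟩ := hK1.exists_bound_of_continuousOn hgrad.continuousOn
  set M₀ : ℝ := max M 0 with hM₀def
  have hM₀ : ∀ x ∈ K1, ‖gradient U x‖ ≤ M₀ := fun x hx => (hM x hx).trans (le_max_left _ _)
  have hM₀0 : 0 ≤ M₀ := le_max_right _ _
  -- uniform continuity
  have hUuc := (hK1.uniformContinuousOn_of_continuous hUc.continuousOn)
  have hGuc := (hK1.uniformContinuousOn_of_continuous hgrad.continuousOn)
  rw [Metric.uniformContinuousOn_iff] at hUuc hGuc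
  -- the target as a single quantity
  set h : ℝ → ℝ := fun s => ⟪gradient U (φ s), g s⟫ with hhdef
  have hh_meas : AEStronglyMeasurable h (volume.restrict (Icc T₁ T₂)) := by
    exact ((hgrad.comp_continuousOn hφc).aestronglyMeasurable measurableSet_Icc).inner
      hgi.aestronglyMeasurable
  have hφK : ∀ s ∈ Icc T₁ T₂, φ s ∈ K := fun s hs => mem_image_of_mem φ hs
  have hh_int : IntegrableOn h (Icc T₁ T₂) := by
    refine Integrable.mono' (hgi.norm.const_mul M₀) hh_meas ?_
    refine (ae_restrict_iff' measurableSet_Icc).2 (Filter.Eventually.of_forall fun s hs => ?_)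
    calc ‖h s‖ ≤ ‖gradient U (φ s)‖ * ‖g s‖ := norm_inner_le_norm _ _
      _ ≤ M₀ * ‖g s‖ := by
          gcongr
          exact hM₀ _ (hKK1 (hφK s hs))
  have hgn0 : (0:ℝ) ≤ ∫ s in Icc T₁ T₂, ‖g s‖ := integral_nonneg fun s => norm_nonneg _
  have hB : (0:ℝ) < (∫ s in Icc T₁ T₂, ‖g s‖) + 1 := by linarith
  set B : ℝ := (∫ s in Icc T₁ T₂, ‖g s‖) + 1 with hBdef
  -- main estimate
  have key : ∀ c : ℝ, 0 < c →
      |U (φ t) - U x₀ - ∫ s in T₁..t, h s| ≤ c := by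
    intro c hc
    obtain ⟨δ₁, hδ₁, hδ₁p⟩ := hUuc (c/3) (by linarith)
    obtain ⟨δ₂, hδ₂, hδ₂p⟩ := hGuc (c/(3*B)) (by positivity)
    set η : ℝ := min 1 (min (δ₁/2) (min (δ₂/2) (c/(3*(M₀+1))))) with hηdef
    have hη : 0 < η := by
      have : (0:ℝ) < c/(3*(M₀+1)) := by positivity
      simp only [hηdef, lt_min_iff]
      refine ⟨one_pos, by linarith, by linarith, this⟩
    have hη1 : η ≤ 1 := min_le_left _ _
    have hηδ₁ : η < δ₁ := lt_of_le_of_lt ((min_le_right _ _).trans (min_le_left _ _)) (by linarith)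
    have hηδ₂ : η < δ₂ := lt_of_le_of_lt
      (((min_le_right _ _).trans (min_le_right _ _)).trans (min_le_left _ _)) (by linarith)
    have hηM : η ≤ c/(3*(M₀+1)) :=
      ((min_le_right _ _).trans (min_le_right _ _)).trans (min_le_right _ _)
    -- approximate g by a continuous function
    have hg₀ : Integrable ((Icc T₁ T₂).indicator g) volume :=
      (integrable_indicator_iff measurableSet_Icc).2 hgi
    obtain ⟨k, hk_supp, hk_close, hk_cont, hk_int⟩ :=
      hg₀.exists_hasCompactSupport_integral_sub_le hη
    have hk_Icc : IntegrableOn k (Icc T₁ T₂) := hk_int.integrableOn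
    have hdiff_int : IntegrableOn (fun s => ‖g s - k s‖) (Icc T₁ T₂) := (hgi.sub hk_Icc).norm
    have hkg : ∫ s in Icc T₁ T₂, ‖g s - k s‖ ≤ η := by
      have h1 : ∫ s in Icc T₁ T₂, ‖g s - k s‖
          = ∫ s in Icc T₁ T₂, ‖(Icc T₁ T₂).indicator g s - k s‖ := by
        refine setIntegral_congr_fun measurableSet_Icc fun s hs => ?_
        rw [indicator_of_mem hs]
      have h2 : ∫ s in Icc T₁ T₂, ‖(Icc T₁ T₂).indicator g s - k s‖
          ≤ ∫ s, ‖(Icc T₁ T₂).indicator g s - k s‖ :=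
        setIntegral_le_integral (hg₀.sub hk_int).norm
          (Filter.Eventually.of_forall fun s => norm_nonneg _)
      linarith
    -- the approximate path
    set ψ : ℝ → E := fun s => x₀ + ∫ r in T₁..s, k r with hψdef
    have hψ' : ∀ s, HasDerivAt ψ (k s) s := fun s =>
      ((hk_cont.integral_hasStrictDerivAt T₁ s).hasDerivAt).const_add x₀
    have hψc : Continuous ψ := continuous_iff_continuousAt.2 fun s => (hψ' s).continuousAt
    have hψφ : ∀ s ∈ Icc T₁ T₂, ‖ψ s - φ s‖ ≤ η := by
      intro s hs
      have hgs : IntervalIntegrable g volume T₁ s := by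
        refine IntegrableOn.intervalIntegrable ?_
        rw [uIcc_of_le hs.1]
        exact hgi.mono_set (Icc_subset_Icc_right hs.2)
      have hks : IntervalIntegrable k volume T₁ s := hk_cont.intervalIntegrable _ _
      have hdint2 : IntegrableOn (fun r => ‖k r - g r‖) (Icc T₁ T₂) := (hk_Icc.sub hgi).norm
      have heq : ψ s - φ s = ∫ r in T₁..s, (k r - g r) := by
        rw [intervalIntegral.integral_sub hks hgs]
        simp [hψdef, hφdef]
      rw [heq]
      calc ‖∫ r in T₁..s, (k r - g r)‖ ≤ ∫ r in T₁..s, ‖k r - g r‖ :=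
            intervalIntegral.norm_integral_le_integral_norm hs.1
        _ = ∫ r in Ioc T₁ s, ‖k r - g r‖ := intervalIntegral.integral_of_le hs.1
        _ ≤ ∫ r in Icc T₁ T₂, ‖k r - g r‖ := by
            refine setIntegral_mono_set hdint2
              (Filter.Eventually.of_forall fun r => norm_nonneg _)
              (HasSubset.Subset.eventuallyLE ?_)
            exact Ioc_subset_Icc_self.trans (Icc_subset_Icc_right hs.2)
        _ = ∫ r in Icc T₁ T₂, ‖g r - k r‖ := by simp only [norm_sub_rev]
        _ ≤ η := hkg
    have hψK1 : ∀ s ∈ Icc T₁ T₂, ψ s ∈ K1 := fun s hs =>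
      Metric.mem_cthickening_of_dist_le (ψ s) (φ s) 1 K (hφK s hs)
        (by rw [dist_eq_norm]; exact (hψφ s hs).trans hη1)
    have hψT₁ : ψ T₁ = x₀ := by simp [hψdef]
    -- FTC for the approximate path
    have hderiv : ∀ s ∈ uIcc T₁ t,
        HasDerivAt (fun u => U (ψ u)) (⟪gradient U (ψ s), k s⟫) s := by
      intro s _
      have hUd : HasFDerivAt U (fderiv ℝ U (ψ s)) (ψ s) :=
        (hU.differentiable one_ne_zero (ψ s)).hasFDerivAt
      have hcomp := hUd.comp_hasDerivAt s (hψ' s)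
      rw [grad_inner_eq]
      exact hcomp
    have hcont : Continuous fun s => ⟪gradient U (ψ s), k s⟫ :=
      (hgrad.comp hψc).inner hk_cont
    have hftc : ∫ s in T₁..t, ⟪gradient U (ψ s), k s⟫ = U (ψ t) - U (ψ T₁) :=
      intervalIntegral.integral_eq_sub_of_hasDerivAt hderiv (hcont.intervalIntegrable _ _)
    have htmem : t ∈ Icc T₁ T₂ := ⟨hT₁t, htT₂⟩
    -- first error term
    have hterm1 : |U (φ t) - U (ψ t)| ≤ c/3 := by
      have hd := hδ₁p (φ t) (hKK1 (hφK t htmem)) (ψ t) (hψK1 t htmem)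
        (by rw [dist_eq_norm, norm_sub_rev]; exact lt_of_le_of_lt (hψφ t htmem) hηδ₁)
      rw [Real.dist_eq] at hd
      exact hd.le
    -- second error term
    have hh_ii : IntervalIntegrable h volume T₁ t := by
      refine IntegrableOn.intervalIntegrable ?_
      rw [uIcc_of_le hT₁t]
      exact hh_int.mono_set (Icc_subset_Icc_right htT₂)
    have hF_int : IntegrableOn (fun s => ‖⟪gradient U (ψ s), k s⟫ - h s‖) (Icc T₁ T₂) :=
      (hcont.integrableOn_Icc.sub hh_int).norm
    have hpt : ∀ s ∈ Icc T₁ T₂, ‖⟪gradient U (ψ s), k s⟫ - h s‖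
        ≤ c/(3*B) * ‖k s‖ + M₀ * ‖g s - k s‖ := by
      intro s hs
      have e : ⟪gradient U (ψ s), k s⟫ - h s
          = ⟪gradient U (ψ s) - gradient U (φ s), k s⟫
            + ⟪gradient U (φ s), k s - g s⟫ := by
        simp only [hhdef, inner_sub_left, inner_sub_right]
        ring
      have h1 : ‖⟪gradient U (ψ s) - gradient U (φ s), k s⟫‖ ≤ c/(3*B) * ‖k s‖ := by
        refine (norm_inner_le_norm _ _).trans ?_
        refine mul_le_mul_of_nonneg_right ?_ (norm_nonneg _)
        have hd := hδ₂p (ψ s) (hψK1 s hs) (φ s) (hKK1 (hφK s hs))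
          (by rw [dist_eq_norm]; exact lt_of_le_of_lt (hψφ s hs) hηδ₂)
        rw [dist_eq_norm] at hd
        exact hd.le
      have h2 : ‖⟪gradient U (φ s), k s - g s⟫‖ ≤ M₀ * ‖g s - k s‖ := by
        refine (norm_inner_le_norm _ _).trans ?_
        rw [norm_sub_rev]
        exact mul_le_mul_of_nonneg_right (hM₀ _ (hKK1 (hφK s hs))) (norm_nonneg _)
      calc ‖⟪gradient U (ψ s), k s⟫ - h s‖
          = ‖⟪gradient U (ψ s) - gradient U (φ s), k s⟫
            + ⟪gradient U (φ s), k s - g s⟫‖ := by rw [e]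
        _ ≤ ‖⟪gradient U (ψ s) - gradient U (φ s), k s⟫‖
            + ‖⟪gradient U (φ s), k s - g s⟫‖ := norm_add_le _ _
        _ ≤ c/(3*B) * ‖k s‖ + M₀ * ‖g s - k s‖ := add_le_add h1 h2
    have hterm2 : |∫ s in T₁..t, (⟪gradient U (ψ s), k s⟫ - h s)|
        ≤ ∫ s in Icc T₁ T₂, ‖⟪gradient U (ψ s), k s⟫ - h s‖ := by
      have hb1 : |∫ s in T₁..t, (⟪gradient U (ψ s), k s⟫ - h s)|
          ≤ ∫ s in T₁..t, ‖⟪gradient U (ψ s), k s⟫ - h s‖ := by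
        have := intervalIntegral.norm_integral_le_integral_norm
          (f := fun s => ⟪gradient U (ψ s), k s⟫ - h s) (μ := volume) hT₁t
        simpa [Real.norm_eq_abs] using this
      have hb2 : ∫ s in T₁..t, ‖⟪gradient U (ψ s), k s⟫ - h s‖
          = ∫ s in Ioc T₁ t, ‖⟪gradient U (ψ s), k s⟫ - h s‖ :=
        intervalIntegral.integral_of_le hT₁t
      have hb3 : ∫ s in Ioc T₁ t, ‖⟪gradient U (ψ s), k s⟫ - h s‖
          ≤ ∫ s in Icc T₁ T₂, ‖⟪gradient U (ψ s), k s⟫ - h s‖ := by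
        refine setIntegral_mono_set hF_int
          (Filter.Eventually.of_forall fun r => norm_nonneg _)
          (HasSubset.Subset.eventuallyLE ?_)
        exact Ioc_subset_Icc_self.trans (Icc_subset_Icc_right htT₂)
      linarith
    have hint_bound : ∫ s in Icc T₁ T₂, ‖⟪gradient U (ψ s), k s⟫ - h s‖
        ≤ c/(3*B) * (∫ s in Icc T₁ T₂, ‖k s‖) + M₀ * ∫ s in Icc T₁ T₂, ‖g s - k s‖ := by
      have hmono : ∫ s in Icc T₁ T₂, ‖⟪gradient U (ψ s), k s⟫ - h s‖
          ≤ ∫ s in Icc T₁ T₂, (c/(3*B) * ‖k s‖ + M₀ * ‖g s - k s‖) :=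
        setIntegral_mono_on hF_int
          ((hk_Icc.norm.const_mul _).add (hdiff_int.const_mul _)) measurableSet_Icc hpt
      rwa [integral_add (hk_Icc.norm.const_mul _) (hdiff_int.const_mul _),
        integral_const_mul, integral_const_mul] at hmono
    have hknorm : ∫ s in Icc T₁ T₂, ‖k s‖ ≤ B := by
      have hmono : ∫ s in Icc T₁ T₂, ‖k s‖
          ≤ ∫ s in Icc T₁ T₂, (‖g s‖ + ‖g s - k s‖) := by
        refine setIntegral_mono_on hk_Icc.norm (hgi.norm.add hdiff_int) measurableSet_Icc
          fun s _ => ?_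
        calc ‖k s‖ = ‖g s - (g s - k s)‖ := by congr 1; abel
          _ ≤ ‖g s‖ + ‖g s - k s‖ := norm_sub_le _ _
      rw [integral_add hgi.norm hdiff_int] at hmono
      simp only [hBdef]
      linarith
    -- combine
    have hsplit : U (φ t) - U x₀ - ∫ s in T₁..t, h s
        = (U (φ t) - U (ψ t)) + ∫ s in T₁..t, (⟪gradient U (ψ s), k s⟫ - h s) := by
      rw [intervalIntegral.integral_sub (hcont.intervalIntegrable _ _) hh_ii, hftc, hψT₁]
      ring
    have hcB : 0 < c/(3*B) := by positivity
    have ht2 : |∫ s in T₁..t, (⟪gradient U (ψ s), k s⟫ - h s)| ≤ c/3 + c/3 := by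
      have hgk0 : (0:ℝ) ≤ ∫ s in Icc T₁ T₂, ‖g s - k s‖ :=
        integral_nonneg fun s => norm_nonneg _
      have e1 : c/(3*B) * (∫ s in Icc T₁ T₂, ‖k s‖) ≤ c/(3*B) * B :=
        mul_le_mul_of_nonneg_left hknorm hcB.le
      have e1' : c/(3*B) * B = c/3 := by field_simp
      have e2 : M₀ * ∫ s in Icc T₁ T₂, ‖g s - k s‖ ≤ M₀ * (c/(3*(M₀+1))) :=
        mul_le_mul_of_nonneg_left (hkg.trans hηM) hM₀0
      have e2' : M₀ * (c/(3*(M₀+1))) ≤ c/3 := by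
        rw [mul_div_assoc', div_le_div_iff₀ (by positivity) (by norm_num : (0:ℝ) < 3)]
        nlinarith
      linarith [hterm2, hint_bound, e1, e2]
    calc |U (φ t) - U x₀ - ∫ s in T₁..t, h s|
        ≤ |U (φ t) - U (ψ t)| + |∫ s in T₁..t, (⟪gradient U (ψ s), k s⟫ - h s)| := by
          rw [hsplit]; exact abs_add_le _ _
      _ ≤ c/3 + (c/3 + c/3) := add_le_add hterm1 ht2
      _ = c := by ring
  -- conclude
  have habs : |U (φ t) - U x₀ - ∫ s in T₁..t, h s| ≤ 0 :=
    le_of_forall_pos_le_add fun ε hε => by simpa using key ε hε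
  have : U (φ t) - U x₀ - ∫ s in T₁..t, h s = 0 :=
    abs_eq_zero.1 (le_antisymm habs (abs_nonneg _))
  have := sub_eq_zero.1 this
  simpa [hφdef, hhdef] using this


/-- A path `φ : [T₁,T₂] → ℝᴺ` is admissible with derivative `g` if `g` is measurable with
square-integrable norm on `[T₁,T₂]` and `φ(t) = φ(T₁) + ∫_{T₁}^t g(s) ds` on `[T₁,T₂]`. -/
def IsAdmissiblePath (N : ℕ) (T₁ T₂ : ℝ)
    (φ g : ℝ → EuclideanSpace ℝ (Fin N)) : Prop :=
  Measurable g ∧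
  MeasureTheory.IntegrableOn (fun t => ‖g t‖ ^ 2) (Set.Icc T₁ T₂) ∧
  ∀ t ∈ Set.Icc T₁ T₂, φ t = φ T₁ + ∫ s in T₁..t, g s

/-- Lower bound for the Freidlin–Wentzell action with gradient drift
`v = −∇U`: `(1/4)∫‖g + ∇U(φ)‖² ≥ sup_t U(φ(t)) − U(φ(T₁)) ≥ U(φ(T₂)) − U(φ(T₁))`, with
equality to `U(φ(T₂)) − U(φ(T₁))` iff `g = ∇U∘φ` almost everywhere on `[T₁,T₂]`, i.e. iff
`φ` is a generalized integral curve of the gradient ascent field `∇U`. -/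
theorem action_gradient_lower_bound (N : ℕ) (hN : 1 ≤ N)
    (U : EuclideanSpace ℝ (Fin N) → ℝ) (hU : ContDiff ℝ 1 U)
    (T₁ T₂ : ℝ) (hT : T₁ ≤ T₂)
    (φ g : ℝ → EuclideanSpace ℝ (Fin N))
    (hφ : IsAdmissiblePath N T₁ T₂ φ g) :
    (∀ t ∈ Icc T₁ T₂,
      U (φ t) - U (φ T₁) ≤
        (1 / 4) * ∫ s in Icc T₁ T₂, ‖g s + gradient U (φ s)‖ ^ 2) ∧
    (U (φ T₂) - U (φ T₁) ≤
      (1 / 4) * ∫ s in Icc T₁ T₂, ‖g s + gradient U (φ s)‖ ^ 2) ∧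
    ((1 / 4) * (∫ s in Icc T₁ T₂, ‖g s + gradient U (φ s)‖ ^ 2) =
        U (φ T₂) - U (φ T₁) ↔
      ∀ᵐ t ∂(volume.restrict (Icc T₁ T₂)), g t = gradient U (φ t)) := by
  obtain ⟨hgmeas, hg2, hpath⟩ := hφ
  set v : ℝ → EuclideanSpace ℝ (Fin N) := fun s => gradient U (φ s) with hvdef
  set h : ℝ → ℝ := fun s => ⟪v s, g s⟫ with hhdef
  -- integrability of g
  have hgae : AEStronglyMeasurable g (volume.restrict (Icc T₁ T₂)) :=
    hgmeas.aestronglyMeasurable.restrict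
  have hgi : IntegrableOn g (Icc T₁ T₂) := by
    refine Integrable.mono' ((integrable_const (1:ℝ)).add hg2) hgae ?_
    refine Filter.Eventually.of_forall fun s => ?_
    simp only [Pi.add_apply]
    nlinarith [norm_nonneg (g s), sq_nonneg (‖g s‖ - 1)]
  -- fundamental theorem of calculus along the path
  have hftc : ∀ t ∈ Icc T₁ T₂, U (φ t) - U (φ T₁) = ∫ s in T₁..t, h s := by
    intro t ht
    have hkey := ftc_comp U hU hT hgi (φ T₁) ht
    rw [← hpath t ht] at hkey
    rw [hkey]
    refine intervalIntegral.integral_congr fun s hs => ?_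
    rw [uIcc_of_le ht.1] at hs
    simp only [hhdef, hvdef]
    rw [← hpath s ⟨hs.1, hs.2.trans ht.2⟩]
  -- continuity and bounds
  have hφc : ContinuousOn φ (Icc T₁ T₂) := by
    have hc : ContinuousOn (fun t => φ T₁ + ∫ s in T₁..t, g s) (Icc T₁ T₂) := by
      rw [← uIcc_of_le hT]
      exact continuousOn_const.add
        (intervalIntegral.continuousOn_primitive_interval (by rwa [uIcc_of_le hT]))
    exact hc.congr hpath
  have hgrad := continuous_gradient U hU
  have hvc : ContinuousOn v (Icc T₁ T₂) := hgrad.comp_continuousOn hφc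
  obtain ⟨Mv, hMv⟩ := (isCompact_Icc.image_of_continuousOn hφc).exists_bound_of_continuousOn
    hgrad.continuousOn
  set Mv₀ : ℝ := max Mv 0 with hMv₀def
  have hMv₀ : ∀ s ∈ Icc T₁ T₂, ‖v s‖ ≤ Mv₀ := fun s hs =>
    (hMv (φ s) (mem_image_of_mem φ hs)).trans (le_max_left _ _)
  have hMv₀0 : 0 ≤ Mv₀ := le_max_right _ _
  have hvae : AEStronglyMeasurable v (volume.restrict (Icc T₁ T₂)) :=
    hvc.aestronglyMeasurable measurableSet_Icc
  -- integrability facts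
  have hh_int : IntegrableOn h (Icc T₁ T₂) := by
    refine Integrable.mono' (hgi.norm.const_mul Mv₀) (hvae.inner hgae) ?_
    refine (ae_restrict_iff' measurableSet_Icc).2 (Filter.Eventually.of_forall fun s hs => ?_)
    calc ‖h s‖ ≤ ‖v s‖ * ‖g s‖ := norm_inner_le_norm _ _
      _ ≤ Mv₀ * ‖g s‖ := mul_le_mul_of_nonneg_right (hMv₀ s hs) (norm_nonneg _)
  have hdom : Integrable (fun s => 2*‖g s‖^2 + 2*Mv₀^2) (volume.restrict (Icc T₁ T₂)) :=
    (hg2.const_mul 2).add (integrable_const _)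
  have hsq_int : ∀ (w : ℝ → EuclideanSpace ℝ (Fin N)),
      AEStronglyMeasurable w (volume.restrict (Icc T₁ T₂)) →
      (∀ s ∈ Icc T₁ T₂, ‖w s‖ ≤ ‖g s‖ + Mv₀) →
      IntegrableOn (fun s => ‖w s‖^2) (Icc T₁ T₂) := by
    intro w hwae hwb
    have hwmeas : AEStronglyMeasurable (fun s => ‖w s‖^2) (volume.restrict (Icc T₁ T₂)) := by
      exact hwae.norm.pow 2
    refine Integrable.mono' hdom hwmeas ?_
    refine (ae_restrict_iff' measurableSet_Icc).2 (Filter.Eventually.of_forall fun s hs => ?_)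
    rw [Real.norm_eq_abs, abs_of_nonneg (sq_nonneg _)]
    nlinarith [hwb s hs, norm_nonneg (w s), norm_nonneg (g s), sq_nonneg (‖g s‖ - Mv₀)]
  have hplus_int : IntegrableOn (fun s => ‖g s + v s‖^2) (Icc T₁ T₂) := by
    refine hsq_int _ (hgae.add hvae) fun s hs => ?_
    calc ‖g s + v s‖ ≤ ‖g s‖ + ‖v s‖ := norm_add_le _ _
      _ ≤ ‖g s‖ + Mv₀ := by linarith [hMv₀ s hs]
  have hminus_int : IntegrableOn (fun s => ‖g s - v s‖^2) (Icc T₁ T₂) := by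
    refine hsq_int _ (hgae.sub hvae) fun s hs => ?_
    calc ‖g s - v s‖ ≤ ‖g s‖ + ‖v s‖ := norm_sub_le _ _
      _ ≤ ‖g s‖ + Mv₀ := by linarith [hMv₀ s hs]
  -- pointwise identity
  have hid : ∀ s, ‖g s + v s‖^2 = ‖g s - v s‖^2 + 4 * h s := by
    intro s
    have h1 := norm_add_sq_real (g s) (v s)
    have h2 := norm_sub_sq_real (g s) (v s)
    have h3 : inner ℝ (g s) (v s) = h s := real_inner_comm _ _
    simp only [hhdef] at h3 ⊢
    linarith [h1, h2, h3]
  have hpt : ∀ s, h s ≤ (1/4) * ‖g s + v s‖^2 := fun s => by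
    linarith [hid s, sq_nonneg (‖g s - v s‖)]
  -- integral of h over Icc
  have hinth : ∫ s in Icc T₁ T₂, h s = U (φ T₂) - U (φ T₁) := by
    rw [integral_Icc_eq_integral_Ioc, ← intervalIntegral.integral_of_le hT]
    exact (hftc T₂ ⟨hT, le_rfl⟩).symm
  -- integral identity
  have hint_id : ∫ s in Icc T₁ T₂, ‖g s + v s‖^2
      = (∫ s in Icc T₁ T₂, ‖g s - v s‖^2) + 4 * ∫ s in Icc T₁ T₂, h s := by
    calc ∫ s in Icc T₁ T₂, ‖g s + v s‖^2
        = ∫ s in Icc T₁ T₂, (‖g s - v s‖^2 + 4 * h s) := by simp only [hid]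
      _ = (∫ s in Icc T₁ T₂, ‖g s - v s‖^2) + ∫ s in Icc T₁ T₂, 4 * h s :=
          integral_add hminus_int (hh_int.const_mul 4)
      _ = (∫ s in Icc T₁ T₂, ‖g s - v s‖^2) + 4 * ∫ s in Icc T₁ T₂, h s := by
          rw [integral_const_mul]
  -- first claim
  have claim1 : ∀ t ∈ Icc T₁ T₂,
      U (φ t) - U (φ T₁) ≤ (1/4) * ∫ s in Icc T₁ T₂, ‖g s + v s‖^2 := by
    intro t ht
    have hsub : Ioc T₁ t ⊆ Icc T₁ T₂ := Ioc_subset_Icc_self.trans (Icc_subset_Icc_right ht.2)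
    rw [hftc t ht, intervalIntegral.integral_of_le ht.1]
    calc ∫ s in Ioc T₁ t, h s ≤ ∫ s in Ioc T₁ t, (1/4) * ‖g s + v s‖^2 :=
          setIntegral_mono_on (hh_int.mono_set hsub)
            ((hplus_int.mono_set hsub).const_mul _) measurableSet_Ioc (fun s _ => hpt s)
      _ ≤ ∫ s in Icc T₁ T₂, (1/4) * ‖g s + v s‖^2 := by
          refine setIntegral_mono_set (hplus_int.const_mul _)
            (Filter.Eventually.of_forall fun s => by positivity)
            (HasSubset.Subset.eventuallyLE hsub)
      _ = (1/4) * ∫ s in Icc T₁ T₂, ‖g s + v s‖^2 := integral_const_mul _ _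
  refine ⟨claim1, claim1 T₂ ⟨hT, le_rfl⟩, ?_⟩
  -- equality case
  have hminus0 : (∫ s in Icc T₁ T₂, ‖g s - v s‖^2) = 0 ↔
      ∀ᵐ t ∂(volume.restrict (Icc T₁ T₂)), g t = v t := by
    rw [integral_eq_zero_iff_of_nonneg_ae
      (Filter.Eventually.of_forall fun s => sq_nonneg _) hminus_int]
    constructor
    · intro h0
      filter_upwards [h0] with s hs
      have hs' : ‖g s - v s‖^2 = 0 := hs
      have := pow_eq_zero_iff (n := 2) (by norm_num) |>.1 hs'
      rwa [norm_eq_zero, sub_eq_zero] at this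
    · intro h0
      filter_upwards [h0] with s hs
      simp [Pi.zero_apply, hs]
  constructor
  · intro heq
    refine hminus0.1 ?_
    linarith [hint_id, hinth, heq]
  · intro h0
    have h1 : (∫ s in Icc T₁ T₂, ‖g s - v s‖^2) = 0 := hminus0.2 h0
    linarith [hint_id, hinth, h1]
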